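/- For M ∈ ℂ^{p×m}, define μ_{ℝ,q}(M)⁻¹ = inf{‖Δ‖_q : Δ ∈ ℝ^{m×p}, det(I_m − ΔM) = 0} for q ∈ {2, F} (spectral and Frobenius norms). If the spectral-norm infimum is attained by a matrix of rank at most two, then (1/√2) μ_{ℝ,2}(M) ≤ μ_{ℝ,F}(M) ≤ μ_{ℝ,2}(M). -/

import Mathlib

open Matrix

/-- Spectral (operator 2-) norm of a real matrix. -/
noncomputable def specNorm {m p : ℕ} (A : Matrix (Fin m) (Fin p) ℝ) : ℝ :=
  ‖LinearMap.toContinuousLinearMap (Matrix.toEuclideanLin A)‖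

/-- Frobenius norm of a real matrix. -/
noncomputable def frobNorm {m p : ℕ} (A : Matrix (Fin m) (Fin p) ℝ) : ℝ :=
  Real.sqrt (∑ i, ∑ j, (A i j) ^ 2)

lemma specNorm_nonneg {m p : ℕ} (A : Matrix (Fin m) (Fin p) ℝ) : 0 ≤ specNorm A :=
  norm_nonneg _

lemma frobNorm_nonneg {m p : ℕ} (A : Matrix (Fin m) (Fin p) ℝ) : 0 ≤ frobNorm A :=
  Real.sqrt_nonneg _

lemma norm_toEuclideanLin_le {m p : ℕ} (A : Matrix (Fin m) (Fin p) ℝ)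
    (v : EuclideanSpace ℝ (Fin p)) :
    ‖Matrix.toEuclideanLin A v‖ ≤ specNorm A * ‖v‖ := by
  have := (LinearMap.toContinuousLinearMap (Matrix.toEuclideanLin A)).le_opNorm v
  simpa [specNorm] using this

lemma specNorm_le_frobNorm {m p : ℕ} (A : Matrix (Fin m) (Fin p) ℝ) :
    specNorm A ≤ frobNorm A := by
  refine ContinuousLinearMap.opNorm_le_bound _ (frobNorm_nonneg A) (fun v => ?_)
  have hv : ‖v‖ = Real.sqrt (∑ j, (v j) ^ 2) := by
    simp [EuclideanSpace.norm_eq, Real.norm_eq_abs, sq_abs]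
  have hAv : ‖(LinearMap.toContinuousLinearMap (Matrix.toEuclideanLin A)) v‖
      = Real.sqrt (∑ i, ((A *ᵥ (fun j => v j)) i) ^ 2) := by
    rw [show ((LinearMap.toContinuousLinearMap (Matrix.toEuclideanLin A)) v : EuclideanSpace ℝ (Fin m)) = Matrix.toEuclideanLin A v from rfl]
    simp [EuclideanSpace.norm_eq, Real.norm_eq_abs, sq_abs]
  rw [hAv, hv, frobNorm, ← Real.sqrt_mul (by positivity)]
  apply Real.sqrt_le_sqrt
  rw [Finset.sum_mul]
  apply Finset.sum_le_sum
  intro i _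
  calc ((A *ᵥ (fun j => v j)) i) ^ 2 = (∑ j, A i j * v j) ^ 2 := rfl
    _ ≤ (∑ j, (A i j) ^ 2) * (∑ j, (v j) ^ 2) :=
        Finset.sum_mul_sq_le_sq_mul_sq _ _ _

lemma trace_eq_sum_eigenvalues {n : ℕ} (B : Matrix (Fin n) (Fin n) ℝ) (hB : B.IsHermitian) :
    B.trace = ∑ i, hB.eigenvalues i := by
  nth_rewrite 1 [hB.spectral_theorem]
  rw [Unitary.conjStarAlgAut_apply, Matrix.trace_mul_cycle, Unitary.coe_star_mul_self, Matrix.one_mul,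
    Matrix.trace_diagonal]
  simp

lemma eigenvalue_le_spec_sq {m p : ℕ} (A : Matrix (Fin m) (Fin p) ℝ) (i : Fin p) :
    (isHermitian_conjTranspose_mul_self A).eigenvalues i ≤ specNorm A ^ 2 := by
  set hB := isHermitian_conjTranspose_mul_self A with hBdef
  set v : EuclideanSpace ℝ (Fin p) := hB.eigenvectorBasis i with hvdef
  have hnv : ‖v‖ = 1 := hB.eigenvectorBasis.orthonormal.1 i
  have hdvv : dotProduct (⇑v) (⇑v) = 1 := by
    have h1 : (inner ℝ v v : ℝ) = 1 := by
      rw [real_inner_self_eq_norm_sq, hnv]; norm_num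
    rw [PiLp.inner_apply] at h1
    simpa [dotProduct, sq] using h1
  have h1 : (Aᴴ * A) *ᵥ ⇑v = hB.eigenvalues i • ⇑v := hB.mulVec_eigenvectorBasis i
  have h2 : hB.eigenvalues i = dotProduct (⇑v) ((Aᴴ * A) *ᵥ ⇑v) := by
    rw [h1, dotProduct_smul, hdvv, smul_eq_mul, mul_one]
  have h3 : dotProduct (⇑v) ((Aᴴ * A) *ᵥ ⇑v) = ∑ j, ((A *ᵥ ⇑v) j) ^ 2 := by
    rw [show (Aᴴ : Matrix (Fin p) (Fin m) ℝ) = Aᵀ by ext; simp,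
      ← Matrix.mulVec_mulVec, Matrix.dotProduct_mulVec, Matrix.vecMul_transpose]
    simp [dotProduct, sq]
  have h4 : Real.sqrt (∑ j, ((A *ᵥ ⇑v) j) ^ 2) ≤ specNorm A := by
    have hle := norm_toEuclideanLin_le A v
    rw [hnv, mul_one] at hle
    have : ‖Matrix.toEuclideanLin A v‖ = Real.sqrt (∑ j, ((A *ᵥ ⇑v) j) ^ 2) := by
      simp [EuclideanSpace.norm_eq, Real.norm_eq_abs, sq_abs]
    linarith [this ▸ hle]
  have h5 : ∑ j, ((A *ᵥ ⇑v) j) ^ 2 ≤ specNorm A ^ 2 := by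
    have := Real.sqrt_le_sqrt (le_of_eq (rfl : ∑ j, ((A *ᵥ ⇑v) j) ^ 2 = _))
    calc ∑ j, ((A *ᵥ ⇑v) j) ^ 2
        = (Real.sqrt (∑ j, ((A *ᵥ ⇑v) j) ^ 2)) ^ 2 := by
          rw [Real.sq_sqrt (by positivity)]
      _ ≤ specNorm A ^ 2 := by
          apply pow_le_pow_left₀ (Real.sqrt_nonneg _) h4
  rw [h2, h3]; exact h5

lemma frobNorm_le_sqrt_two_mul_specNorm {m p : ℕ} (A : Matrix (Fin m) (Fin p) ℝ)
    (hr : A.rank ≤ 2) : frobNorm A ≤ Real.sqrt 2 * specNorm A := by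
  classical
  set hB := isHermitian_conjTranspose_mul_self A with hBdef
  have htr : ∑ i, ∑ j, (A i j) ^ 2 = (Aᴴ * A).trace := by
    rw [Matrix.trace]
    rw [Finset.sum_comm]
    apply Finset.sum_congr rfl
    intro j _
    simp [Matrix.mul_apply, Matrix.diag, sq]
  have hcard : (Finset.univ.filter (fun i => hB.eigenvalues i ≠ 0)).card ≤ 2 := by
    have h1 := hB.rank_eq_card_non_zero_eigs
    have h2 : (Aᴴ * A).rank = A.rank := Matrix.rank_conjTranspose_mul_self A
    rw [Fintype.card_subtype] at h1
    omega
  have hsum : ∑ i, hB.eigenvalues i ≤ 2 * specNorm A ^ 2 := by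
    rw [← Finset.sum_filter_ne_zero Finset.univ]
    calc ∑ i ∈ Finset.univ.filter (fun i => hB.eigenvalues i ≠ 0), hB.eigenvalues i
        ≤ (Finset.univ.filter (fun i => hB.eigenvalues i ≠ 0)).card • (specNorm A ^ 2) :=
          Finset.sum_le_card_nsmul _ _ _ (fun i _ => eigenvalue_le_spec_sq A i)
      _ ≤ 2 * specNorm A ^ 2 := by
          rw [nsmul_eq_mul]
          apply mul_le_mul_of_nonneg_right _ (by positivity)
          exact_mod_cast hcard
  have h6 : frobNorm A ≤ Real.sqrt (2 * specNorm A ^ 2) := by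
    unfold frobNorm
    apply Real.sqrt_le_sqrt
    rw [htr, trace_eq_sum_eigenvalues _ hB]
    exact hsum
  rw [Real.sqrt_mul (by norm_num : (0:ℝ) ≤ 2), Real.sqrt_sq (specNorm_nonneg A)] at h6
  exact h6

theorem mu_frobenius_between_mu_spectral
    {p m : ℕ} (M : Matrix (Fin p) (Fin m) ℂ)
    (hattained : ∃ Δhat : Matrix (Fin m) (Fin p) ℝ,
      ((1 : Matrix (Fin m) (Fin m) ℂ) - Δhat.map (Complex.ofReal) * M).det = 0 ∧
      specNorm Δhat = sInf {t : ℝ | ∃ Δ : Matrix (Fin m) (Fin p) ℝ,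
          ((1 : Matrix (Fin m) (Fin m) ℂ) - Δ.map (Complex.ofReal) * M).det = 0 ∧
          t = specNorm Δ} ∧
      Δhat.rank ≤ 2) :
    (1 / Real.sqrt 2) *
        (sInf {t : ℝ | ∃ Δ : Matrix (Fin m) (Fin p) ℝ,
          ((1 : Matrix (Fin m) (Fin m) ℂ) - Δ.map (Complex.ofReal) * M).det = 0 ∧
          t = specNorm Δ})⁻¹
      ≤ (sInf {t : ℝ | ∃ Δ : Matrix (Fin m) (Fin p) ℝ,
          ((1 : Matrix (Fin m) (Fin m) ℂ) - Δ.map (Complex.ofReal) * M).det = 0 ∧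
          t = frobNorm Δ})⁻¹ ∧
    (sInf {t : ℝ | ∃ Δ : Matrix (Fin m) (Fin p) ℝ,
          ((1 : Matrix (Fin m) (Fin m) ℂ) - Δ.map (Complex.ofReal) * M).det = 0 ∧
          t = frobNorm Δ})⁻¹
      ≤ (sInf {t : ℝ | ∃ Δ : Matrix (Fin m) (Fin p) ℝ,
          ((1 : Matrix (Fin m) (Fin m) ℂ) - Δ.map (Complex.ofReal) * M).det = 0 ∧
          t = specNorm Δ})⁻¹ := by
  obtain ⟨Δhat, hdet, hspec, hrank⟩ := hattained
  set S := {t : ℝ | ∃ Δ : Matrix (Fin m) (Fin p) ℝ,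
      ((1 : Matrix (Fin m) (Fin m) ℂ) - Δ.map (Complex.ofReal) * M).det = 0 ∧
      t = specNorm Δ} with hSdef
  set F := {t : ℝ | ∃ Δ : Matrix (Fin m) (Fin p) ℝ,
      ((1 : Matrix (Fin m) (Fin m) ℂ) - Δ.map (Complex.ofReal) * M).det = 0 ∧
      t = frobNorm Δ} with hFdef
  have hSbdd : BddBelow S := ⟨0, fun t ht => by
    obtain ⟨Δ, _, rfl⟩ := ht; exact specNorm_nonneg Δ⟩
  have hFbdd : BddBelow F := ⟨0, fun t ht => by
    obtain ⟨Δ, _, rfl⟩ := ht; exact frobNorm_nonneg Δ⟩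
  have hFne : F.Nonempty := ⟨frobNorm Δhat, Δhat, hdet, rfl⟩
  have ha0 : 0 ≤ sInf S := Real.sInf_nonneg (fun t ht => by
    obtain ⟨Δ, _, rfl⟩ := ht; exact specNorm_nonneg Δ)
  have hb0 : 0 ≤ sInf F := Real.sInf_nonneg (fun t ht => by
    obtain ⟨Δ, _, rfl⟩ := ht; exact frobNorm_nonneg Δ)
  have hab : sInf S ≤ sInf F := by
    apply le_csInf hFne
    rintro t ⟨Δ, hΔ, rfl⟩
    exact (csInf_le hSbdd ⟨Δ, hΔ, rfl⟩).trans (specNorm_le_frobNorm Δ)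
  have hba : sInf F ≤ Real.sqrt 2 * sInf S := by
    calc sInf F ≤ frobNorm Δhat := csInf_le hFbdd ⟨Δhat, hdet, rfl⟩
      _ ≤ Real.sqrt 2 * specNorm Δhat := frobNorm_le_sqrt_two_mul_specNorm Δhat hrank
      _ = Real.sqrt 2 * sInf S := by rw [hspec]
  rcases eq_or_lt_of_le ha0 with ha | ha
  · have hb : sInf F = 0 := le_antisymm (by simpa [← ha] using hba) hb0
    rw [← ha, hb]
    norm_num
  · have hb : 0 < sInf F := lt_of_lt_of_le ha hab
    constructor
    · rw [one_div, ← mul_inv]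
      exact inv_anti₀ hb hba
    · exact inv_anti₀ ha hab
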